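/- Let G be a finite simple graph and f a uniformly random labeling with fixed label counts. For pairwise distinct labels i, j, k, Cov(R_{ii}, R_{jk}) = (|G|^2 - sum_t |G_t|^2 + |G|) * 2 n_i n_j n_k (n_i - 1)/(N(N-1)(N-2)(N-3)) - E(R_{ii}) E(R_{jk}). -/

import Mathlib

open Finset

variable {V : Type*} [Fintype V] [DecidableEq V] {K : ℕ}

/-- The set of labelings `f : V → Fin K` with exactly `n k` vertices labeled `k`. -/
def labelings (n : Fin K → ℕ) : Finset (V → Fin K) :=
  Finset.univ.filter fun f => ∀ k, (Finset.univ.filter fun x => f x = k).card = n k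

/-- Probability of an event under the uniform distribution on `labelings n`. -/
noncomputable def prob (n : Fin K → ℕ) (P : (V → Fin K) → Prop) [DecidablePred P] : ℝ :=
  (((labelings n).filter P).card : ℝ) / (((labelings n : Finset (V → Fin K))).card : ℝ)

/-- Expectation of a real random variable under the uniform distribution on `labelings n`. -/
noncomputable def expect (n : Fin K → ℕ) (X : (V → Fin K) → ℝ) : ℝ :=
  (∑ f ∈ labelings n, X f) / (((labelings n : Finset (V → Fin K))).card : ℝ)

/-- Covariance under the uniform distribution on `labelings n`. -/
noncomputable def covar (n : Fin K → ℕ) (X Y : (V → Fin K) → ℝ) : ℝ :=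
  expect n (fun f => (X f - expect n X) * (Y f - expect n Y))

/-- `Rcount G f i j` is the number of edges of `G` whose endpoint labels (under `f`)
are exactly the unordered pair `{i, j}`. -/
def Rcount (G : SimpleGraph V) [DecidableRel G.Adj] (f : V → Fin K) (i j : Fin K) : ℕ :=
  (G.edgeFinset.filter fun e => Sym2.map f e = s(i, j)).card

/-! ### Auxiliary lemmas -/

set_option linter.unusedSectionVars false
set_option maxHeartbeats 1600000

section Aux

lemma exists_perm_comp {ι : Type*} (t₁ t₂ : ι ↪ V) :
    ∃ σ : Equiv.Perm V, ∀ x, σ (t₁ x) = t₂ x := by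
  classical
  let e : {x // x ∈ Set.range t₁} ≃ {x // x ∈ Set.range t₂} :=
    (Equiv.ofInjective t₁ t₁.injective).symm.trans (Equiv.ofInjective t₂ t₂.injective)
  refine ⟨e.extendSubtype, fun x => ?_⟩
  rw [Equiv.extendSubtype_apply_of_mem e (t₁ x) ⟨x, rfl⟩]
  show (t₂ ((Equiv.ofInjective t₁ t₁.injective).symm ⟨t₁ x, _⟩) : V) = t₂ x
  congr 1
  exact (Equiv.ofInjective t₁ t₁.injective).injective (by simp)

lemma comp_perm_mem_labelings {n : Fin K → ℕ} (σ : Equiv.Perm V) {f : V → Fin K}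
    (hf : f ∈ labelings n) : f ∘ σ ∈ labelings n := by
  simp only [labelings, mem_filter, mem_univ, true_and] at hf ⊢
  intro k
  rw [← hf k]
  exact Finset.card_nbij' (i := fun x => σ x) (j := fun x => σ.symm x)
    (by intro x hx; simpa using hx) (by intro x hx; simpa using hx) (by intro x _; simp) (by intro x _; simp)

/-- The fiberwise decomposition of label-respecting embeddings. -/
def tupleEquiv {ι : Type*} (f : V → Fin K) (g : ι → Fin K) :
    {t : ι ↪ V // ∀ x, f (t x) = g x} ≃ (∀ k : Fin K, ({x // g x = k} ↪ {v // f v = k})) where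
  toFun t k := ⟨fun x => ⟨t.1 x.1, by rw [t.2 x.1, x.2]⟩,
    fun x y h => Subtype.ext (t.1.injective (congrArg Subtype.val h))⟩
  invFun e := ⟨⟨fun x => (e (g x) ⟨x, rfl⟩).1, by
      intro x y h
      replace h : ((e (g x)) ⟨x, rfl⟩ : {v // f v = g x}).1 = ((e (g y)) ⟨y, rfl⟩).1 := h
      have key : ∀ (kk : Fin K) (z : ι) (hz : g z = kk),
          ((e kk) ⟨z, hz⟩).1 = ((e (g z)) ⟨z, rfl⟩).1 := by
        rintro kk z rfl; rfl
      have hg : g x = g y := by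
        rw [← (e (g x) ⟨x, rfl⟩).2, h, (e (g y) ⟨y, rfl⟩).2]
      have h2 : ((e (g x)) ⟨y, hg.symm⟩ : {v // f v = g x}).1 = ((e (g y)) ⟨y, rfl⟩).1 :=
        key (g x) y hg.symm
      have := (e (g x)).injective (a₁ := ⟨x, rfl⟩) (a₂ := ⟨y, hg.symm⟩)
        (Subtype.ext (by rw [h2]; exact h))
      exact congrArg Subtype.val this⟩,
    fun x => (e (g x) ⟨x, rfl⟩).2⟩
  left_inv t := by
    apply Subtype.ext; apply Function.Embedding.ext; intro x; rfl
  right_inv e := by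
    funext kk
    apply Function.Embedding.ext
    rintro ⟨x, rfl⟩
    rfl

lemma count_tuple_invariant (n : Fin K → ℕ) {ι : Type*} [Fintype ι] (g : ι → Fin K)
    (t t' : ι ↪ V) :
    ((labelings n).filter fun f => ∀ x, f (t x) = g x).card
      = ((labelings n).filter fun f => ∀ x, f (t' x) = g x).card := by
  classical
  obtain ⟨σ, hσ⟩ := exists_perm_comp t t'
  refine Finset.card_nbij' (i := fun f => f ∘ σ.symm) (j := fun f => f ∘ σ) ?_ ?_ ?_ ?_
  · intro f hf
    simp only [Finset.mem_coe, mem_filter] at hf ⊢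
    refine ⟨comp_perm_mem_labelings σ.symm hf.1, fun x => ?_⟩
    simp only [Function.comp_apply]
    rw [← hσ x, Equiv.symm_apply_apply]
    exact hf.2 x
  · intro f hf
    simp only [Finset.mem_coe, mem_filter] at hf ⊢
    refine ⟨comp_perm_mem_labelings σ hf.1, fun x => ?_⟩
    simp only [Function.comp_apply]
    rw [hσ x]
    exact hf.2 x
  · intro f _; funext x; simp
  · intro f _; funext x; simp

/-- The master counting identity. -/
lemma master (n : Fin K → ℕ) {ι : Type*} [Fintype ι] [DecidableEq ι]
    (g : ι → Fin K) (t : ι ↪ V) :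
    ((labelings n).filter fun f => ∀ x, f (t x) = g x).card
        * (Fintype.card V).descFactorial (Fintype.card ι)
      = (labelings n : Finset (V → Fin K)).card
        * ∏ kk, (n kk).descFactorial ((univ.filter fun x => g x = kk).card) := by
  classical
  have h1 : ∀ t' : ι ↪ V, ((labelings n).filter fun f => ∀ x, f (t' x) = g x).card
      = ((labelings n).filter fun f => ∀ x, f (t x) = g x).card :=
    fun t' => count_tuple_invariant n g t' t
  have h2 : ∑ t' : ι ↪ V, ((labelings n).filter fun f => ∀ x, f (t' x) = g x).card
      = ((labelings n).filter fun f => ∀ x, f (t x) = g x).card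
        * (Fintype.card V).descFactorial (Fintype.card ι) := by
    rw [Finset.sum_congr rfl fun t' _ => h1 t', Finset.sum_const, smul_eq_mul,
      Finset.card_univ, Fintype.card_embedding_eq, mul_comm]
  rw [← h2]
  have h3 : ∀ t' : ι ↪ V, ((labelings n).filter fun f => ∀ x, f (t' x) = g x).card
      = ∑ f ∈ labelings n, if (∀ x, f (t' x) = g x) then 1 else 0 :=
    fun t' => Finset.card_filter _ _
  rw [Finset.sum_congr rfl fun t' _ => h3 t', Finset.sum_comm]
  rw [Finset.sum_congr rfl (g := fun f => ∏ kk, (n kk).descFactorial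
      ((univ.filter fun x => g x = kk).card)) ?_, Finset.sum_const, smul_eq_mul]
  intro f hf
  have : ∑ t' : ι ↪ V, (if (∀ x, f (t' x) = g x) then 1 else 0)
      = (univ.filter fun t' : ι ↪ V => ∀ x, f (t' x) = g x).card :=
    (Finset.card_filter _ _).symm
  rw [this, ← Fintype.card_subtype, Fintype.card_congr (tupleEquiv f g), Fintype.card_pi]
  refine Finset.prod_congr rfl fun kk _ => ?_
  rw [Fintype.card_embedding_eq, Fintype.card_subtype, Fintype.card_subtype]
  congr 1
  simp only [labelings, mem_filter] at hf
  exact hf.2 kk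

/-- Fiber of a sigma type. -/
def sigmaFiber (n : Fin K → ℕ) (kk : Fin K) :
    {s : Σ k : Fin K, Fin (n k) // s.1 = kk} ≃ Fin (n kk) where
  toFun s := s.2 ▸ s.1.2
  invFun b := ⟨⟨kk, b⟩, rfl⟩
  left_inv := by rintro ⟨⟨k', b⟩, rfl⟩; rfl
  right_inv b := rfl

lemma labelings_nonempty (n : Fin K → ℕ) (hsum : ∑ k, n k = Fintype.card V) :
    (labelings (V := V) n).Nonempty := by
  classical
  have hcard : Fintype.card V = Fintype.card (Σ k : Fin K, Fin (n k)) := by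
    simp [Fintype.card_sigma, ← hsum]
  let E := Fintype.equivOfCardEq hcard
  refine ⟨fun v => (E v).1, ?_⟩
  simp only [labelings, mem_filter, mem_univ, true_and]
  intro kk
  rw [← Fintype.card_subtype]
  rw [Fintype.card_congr ((Equiv.subtypeEquiv E (fun x => Iff.rfl)).trans (sigmaFiber n kk))]
  exact Fintype.card_fin _

lemma forall_fin_two' {P : Fin 2 → Prop} : (∀ x : Fin 2, P x) ↔ P 0 ∧ P 1 :=
  ⟨fun h => ⟨h 0, h 1⟩, by rintro ⟨h0, h1⟩ x; fin_cases x <;> assumption⟩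

lemma forall_fin_four' {P : Fin 4 → Prop} : (∀ x : Fin 4, P x) ↔ P 0 ∧ P 1 ∧ P 2 ∧ P 3 :=
  ⟨fun h => ⟨h 0, h 1, h 2, h 3⟩, by rintro ⟨h0, h1, h2, h3⟩ x; fin_cases x <;> assumption⟩

lemma count_pair_ii (i kk : Fin K) :
    (univ.filter fun x : Fin 2 => ![i, i] x = kk).card = if i = kk then 2 else 0 := by
  rw [Finset.card_filter, Fin.sum_univ_two]
  by_cases h : i = kk <;> simp [h]

lemma count_pair_jk (j k kk : Fin K) (hjk : j ≠ k) :
    (univ.filter fun x : Fin 2 => ![j, k] x = kk).card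
      = if j = kk then 1 else if k = kk then 1 else 0 := by
  rw [Finset.card_filter, Fin.sum_univ_two]
  by_cases h1 : j = kk <;> by_cases h2 : k = kk <;> simp_all

lemma count_quad (i j k kk : Fin K) (hij : i ≠ j) (hik : i ≠ k) (hjk : j ≠ k) :
    (univ.filter fun x : Fin 4 => ![i, i, j, k] x = kk).card
      = if i = kk then 2 else if j = kk then 1 else if k = kk then 1 else 0 := by
  rw [Finset.card_filter, Fin.sum_univ_four]
  by_cases h1 : i = kk <;> by_cases h2 : j = kk <;> by_cases h3 : k = kk <;>
    simp_all

lemma prod_pair_ii (n : Fin K → ℕ) (i : Fin K) :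
    (∏ kk, (n kk).descFactorial ((univ.filter fun x : Fin 2 => ![i, i] x = kk).card))
      = (n i).descFactorial 2 := by
  rw [Finset.prod_congr rfl fun kk _ => by rw [count_pair_ii]]
  rw [Finset.prod_eq_single i (fun b _ hb => by simp [Ne.symm hb]) (by simp)]
  simp

lemma prod_pair_jk (n : Fin K → ℕ) (j k : Fin K) (hjk : j ≠ k) :
    (∏ kk, (n kk).descFactorial ((univ.filter fun x : Fin 2 => ![j, k] x = kk).card))
      = n j * n k := by
  rw [Finset.prod_congr rfl fun kk _ => by rw [count_pair_jk j k kk hjk]]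
  rw [← Finset.prod_subset (Finset.subset_univ ({j, k} : Finset (Fin K)))
    (fun x _ hx => by simp only [mem_insert, mem_singleton, not_or] at hx; simp [Ne.symm hx.1, Ne.symm hx.2])]
  rw [Finset.prod_pair hjk]
  simp [hjk, hjk.symm]

lemma prod_quad (n : Fin K → ℕ) (i j k : Fin K) (hij : i ≠ j) (hik : i ≠ k) (hjk : j ≠ k) :
    (∏ kk, (n kk).descFactorial ((univ.filter fun x : Fin 4 => ![i, i, j, k] x = kk).card))
      = (n i).descFactorial 2 * (n j * n k) := by
  rw [Finset.prod_congr rfl fun kk _ => by rw [count_quad i j k kk hij hik hjk]]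
  rw [← Finset.prod_subset (Finset.subset_univ ({i, j, k} : Finset (Fin K)))
    (fun x _ hx => by simp only [mem_insert, mem_singleton, not_or] at hx; simp [Ne.symm hx.1, Ne.symm hx.2.1, Ne.symm hx.2.2])]
  rw [Finset.prod_insert (by simp [hij, hik]), Finset.prod_insert (by simp [hjk])]
  simp [hij, hik, hij.symm, hik.symm, hjk.symm, hjk, Nat.descFactorial]

lemma card_filter_of_iff {α : Type*} {P Q : α → Prop} (h1 : DecidablePred P)
    (h2 : DecidablePred Q) (s : Finset α) (h : ∀ x ∈ s, P x ↔ Q x) :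
    (@Finset.filter _ P h1 s).card = (@Finset.filter _ Q h2 s).card := by
  congr 1
  exact @Finset.filter_congr _ _ _ h1 h2 _ h

def pairEmb (a b : V) (hab : a ≠ b) : Fin 2 ↪ V :=
  ⟨![a, b], by intro x y h; fin_cases x <;> fin_cases y <;> simp_all⟩

def quadEmb (a b c d : V) (hab : a ≠ b) (hac : a ≠ c) (had : a ≠ d)
    (hbc : b ≠ c) (hbd : b ≠ d) (hcd : c ≠ d) : Fin 4 ↪ V :=
  ⟨![a, b, c, d], by intro x y h; fin_cases x <;> fin_cases y <;> simp_all⟩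

lemma count_edge_ii (n : Fin K → ℕ) {a b : V} (hab : a ≠ b) (i : Fin K) :
    ((labelings n).filter fun f => Sym2.map f s(a, b) = s(i, i)).card
        * (Fintype.card V).descFactorial 2
      = (labelings (V := V) n).card * (n i).descFactorial 2 := by
  have hpred : ∀ f : V → Fin K, (Sym2.map f s(a, b) = s(i, i))
      ↔ ∀ x : Fin 2, f (pairEmb a b hab x) = ![i, i] x := by
    intro f
    rw [Sym2.map_pair_eq, Sym2.eq_iff, forall_fin_two']
    simp [pairEmb]
    exact Iff.rfl
  rw [Finset.filter_congr fun f _ => hpred f]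
  have := master n ![i, i] (pairEmb a b hab)
  rw [Fintype.card_fin, prod_pair_ii] at this
  norm_num at this ⊢
  convert this using 2

lemma count_edge_jk (n : Fin K → ℕ) {a b : V} (hab : a ≠ b) (j k : Fin K) (hjk : j ≠ k) :
    ((labelings n).filter fun f => Sym2.map f s(a, b) = s(j, k)).card
        * (Fintype.card V).descFactorial 2
      = (labelings (V := V) n).card * (2 * (n j * n k)) := by
  have hpred : ∀ f : V → Fin K, (Sym2.map f s(a, b) = s(j, k))
      ↔ ((∀ x : Fin 2, f (pairEmb a b hab x) = ![j, k] x)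
          ∨ (∀ x : Fin 2, f (pairEmb a b hab x) = ![k, j] x)) := by
    intro f
    rw [Sym2.map_pair_eq, Sym2.eq_iff, forall_fin_two', forall_fin_two']
    simp [pairEmb]
    exact Iff.rfl
  rw [Finset.filter_congr fun f _ => hpred f, Finset.filter_or,
    Finset.card_union_of_disjoint, add_mul]
  · have h1 := master n ![j, k] (pairEmb a b hab)
    have h2 := master n ![k, j] (pairEmb a b hab)
    rw [Fintype.card_fin, prod_pair_jk n j k hjk] at h1
    rw [Fintype.card_fin, prod_pair_jk n k j hjk.symm] at h2
    norm_num at h1 h2 ⊢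
    rw [show ((2:ℕ) * (n j * n k)) = (n j * n k) + (n k * n j) by ring, Nat.mul_add, ← h1, ← h2]
  · rw [Finset.disjoint_filter]
    intro f _ h1 h2
    have := (forall_fin_two'.1 h1).1
    have h2' := (forall_fin_two'.1 h2).1
    simp [pairEmb] at this h2'
    exact hjk (this ▸ h2' ▸ rfl)

lemma count_disjoint_edges (n : Fin K → ℕ) {a b c d : V} (hab : a ≠ b) (hcd : c ≠ d)
    (hac : a ≠ c) (had : a ≠ d) (hbc : b ≠ c) (hbd : b ≠ d)
    (i j k : Fin K) (hij : i ≠ j) (hik : i ≠ k) (hjk : j ≠ k) :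
    ((labelings n).filter fun f =>
        Sym2.map f s(a, b) = s(i, i) ∧ Sym2.map f s(c, d) = s(j, k)).card
        * (Fintype.card V).descFactorial 4
      = (labelings (V := V) n).card * (2 * ((n i).descFactorial 2 * (n j * n k))) := by
  set t := quadEmb a b c d hab hac had hbc hbd hcd with ht
  have hpred : ∀ f : V → Fin K,
      (Sym2.map f s(a, b) = s(i, i) ∧ Sym2.map f s(c, d) = s(j, k))
      ↔ ((∀ x : Fin 4, f (t x) = ![i, i, j, k] x)
          ∨ (∀ x : Fin 4, f (t x) = ![i, i, k, j] x)) := by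
    intro f
    rw [Sym2.map_pair_eq, Sym2.map_pair_eq, Sym2.eq_iff, Sym2.eq_iff,
      forall_fin_four', forall_fin_four']
    simp [ht, quadEmb]
    tauto
  rw [Finset.filter_congr fun f _ => hpred f, Finset.filter_or,
    Finset.card_union_of_disjoint, add_mul]
  · have h1 := master n ![i, i, j, k] t
    have h2 := master n ![i, i, k, j] t
    rw [Fintype.card_fin, prod_quad n i j k hij hik hjk] at h1
    rw [Fintype.card_fin, prod_quad n i k j hik hij hjk.symm] at h2
    norm_num at h1 h2 ⊢
    rw [show ((2:ℕ) * ((n i - 1) * n i * (n j * n k))) = ((n i - 1) * n i * (n j * n k)) + ((n i - 1) * n i * (n k * n j)) by ring, Nat.mul_add, ← h1, ← h2]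
    congr 2 <;> exact card_filter_of_iff _ _ _ (fun _ _ => Iff.rfl)
  · rw [Finset.disjoint_filter]
    intro f _ h1 h2
    have := (forall_fin_four'.1 h1).2.2.1
    have h2' := (forall_fin_four'.1 h2).2.2.1
    simp [ht, quadEmb] at this h2'
    exact hjk (this ▸ h2' ▸ rfl)

lemma filter_share_empty (n : Fin K → ℕ) (e e' : Sym2 V) (x : V) (hx : x ∈ e) (hx' : x ∈ e')
    (i j k : Fin K) (hij : i ≠ j) (hik : i ≠ k) :
    ((labelings n).filter fun f =>
        Sym2.map f e = s(i, i) ∧ Sym2.map f e' = s(j, k)) = ∅ := by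
  rw [Finset.filter_eq_empty_iff]
  rintro f _ ⟨h1, h2⟩
  have m1 : f x ∈ Sym2.map f e := Sym2.mem_map.2 ⟨x, hx, rfl⟩
  have m2 : f x ∈ Sym2.map f e' := Sym2.mem_map.2 ⟨x, hx', rfl⟩
  rw [h1, Sym2.mem_iff] at m1
  rw [h2, Sym2.mem_iff] at m2
  have m1' : f x = i := m1.elim id id
  rcases m2 with h | h
  · exact hij (m1'.symm.trans h)
  · exact hik (m1'.symm.trans h)

lemma ite_one_mul_ite_one {P Q : Prop} [Decidable P] [Decidable Q] :
    (if P then (1:ℕ) else 0) * (if Q then (1:ℕ) else 0) = if P ∧ Q then 1 else 0 := by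
  by_cases hP : P <;> by_cases hQ : Q <;> simp [hP, hQ]

lemma sum_R (G : SimpleGraph V) [DecidableRel G.Adj] (n : Fin K → ℕ) (p q : Fin K) :
    ∑ f ∈ labelings n, Rcount G f p q
      = ∑ e ∈ G.edgeFinset, ((labelings n).filter fun f => Sym2.map f e = s(p, q)).card := by
  simp only [Rcount, Finset.card_filter]
  exact Finset.sum_comm

lemma sum_RR (G : SimpleGraph V) [DecidableRel G.Adj] (n : Fin K → ℕ) (i j k : Fin K) :
    ∑ f ∈ labelings n, Rcount G f i i * Rcount G f j k
      = ∑ e ∈ G.edgeFinset, ∑ e' ∈ G.edgeFinset,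
          ((labelings n).filter fun f =>
            Sym2.map f e = s(i, i) ∧ Sym2.map f e' = s(j, k)).card := by
  have h1 : ∀ f : V → Fin K, Rcount G f i i * Rcount G f j k
      = ∑ e ∈ G.edgeFinset, ∑ e' ∈ G.edgeFinset,
          (if Sym2.map f e = s(i, i) ∧ Sym2.map f e' = s(j, k) then 1 else 0) := by
    intro f
    simp only [Rcount, Finset.card_filter, Finset.sum_mul_sum]
    exact Finset.sum_congr rfl fun e _ => Finset.sum_congr rfl fun e' _ => ite_one_mul_ite_one
  rw [Finset.sum_congr rfl fun f _ => h1 f]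
  rw [Finset.sum_comm]
  refine Finset.sum_congr rfl fun e _ => ?_
  rw [Finset.sum_comm]
  exact Finset.sum_congr rfl fun e' _ => (Finset.card_filter _ _).symm

lemma degree_eq_card_filter (G : SimpleGraph V) [DecidableRel G.Adj] (t : V) :
    G.degree t = (G.edgeFinset.filter fun e => t ∈ e).card := by
  rw [← SimpleGraph.card_incidenceFinset_eq_degree]
  congr 1
  ext e
  simp [SimpleGraph.mem_incidenceFinset, SimpleGraph.incidenceSet, SimpleGraph.mem_edgeFinset]

lemma sum_deg_sq (G : SimpleGraph V) [DecidableRel G.Adj] :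
    ∑ t : V, G.degree t ^ 2
      = ∑ e ∈ G.edgeFinset, ∑ e' ∈ G.edgeFinset,
          (univ.filter fun t : V => t ∈ e ∧ t ∈ e').card := by
  have h1 : ∀ t : V, G.degree t ^ 2
      = ∑ e ∈ G.edgeFinset, ∑ e' ∈ G.edgeFinset,
          (if t ∈ e ∧ t ∈ e' then 1 else 0) := by
    intro t
    rw [pow_two, degree_eq_card_filter, Finset.card_filter, Finset.sum_mul_sum]
    exact Finset.sum_congr rfl fun e _ => Finset.sum_congr rfl fun e' _ => ite_one_mul_ite_one
  rw [Finset.sum_congr rfl fun t (_ : t ∈ univ) => h1 t, Finset.sum_comm]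
  refine Finset.sum_congr rfl fun e _ => ?_
  rw [Finset.sum_comm]
  exact Finset.sum_congr rfl fun e' _ => (Finset.card_filter _ _).symm

lemma W_self (G : SimpleGraph V) [DecidableRel G.Adj] {e : Sym2 V} (he : e ∈ G.edgeFinset) :
    (univ.filter fun t : V => t ∈ e ∧ t ∈ e).card = 2 := by
  induction e with
  | _ a b =>
    have hab : a ≠ b := by
      rw [SimpleGraph.mem_edgeFinset, SimpleGraph.mem_edgeSet] at he
      exact he.ne
    have : (univ.filter fun t : V => t ∈ s(a, b) ∧ t ∈ s(a, b)) = {a, b} := by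
      ext t; simp [Sym2.mem_iff]
    rw [this, Finset.card_pair hab]

lemma W_share {e e' : Sym2 V}
    (hne : e ≠ e') {x : V} (hx : x ∈ e) (hx' : x ∈ e') :
    (univ.filter fun t : V => t ∈ e ∧ t ∈ e').card = 1 := by
  have : (univ.filter fun t : V => t ∈ e ∧ t ∈ e') = {x} := by
    ext t
    simp only [mem_filter, mem_univ, true_and, mem_singleton]
    constructor
    · rintro ⟨ht, ht'⟩
      by_contra htx
      exact hne (Sym2.eq_of_ne_mem htx ht hx ht' hx')
    · rintro rfl; exact ⟨hx, hx'⟩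
  rw [this, Finset.card_singleton]

lemma W_disjoint {e e' : Sym2 V} (h : ∀ x ∈ e, x ∉ e') :
    (univ.filter fun t : V => t ∈ e ∧ t ∈ e').card = 0 := by
  rw [Finset.card_eq_zero, Finset.filter_eq_empty_iff]
  rintro t _ ⟨ht, ht'⟩
  exact h t ht ht'

lemma W_formula (G : SimpleGraph V) [DecidableRel G.Adj] {e e' : Sym2 V}
    (he : e ∈ G.edgeFinset) (he' : e' ∈ G.edgeFinset) :
    (univ.filter fun t : V => t ∈ e ∧ t ∈ e').card
      = (if e = e' then 1 else 0) + (if ∀ x ∈ e, x ∉ e' then 0 else 1) := by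
  classical
  by_cases heq : e = e'
  · subst heq
    rw [W_self G he, if_pos rfl, if_neg]
    intro h
    exact h e.out.1 (Sym2.out_fst_mem e) (Sym2.out_fst_mem e)
  · rw [if_neg heq]
    by_cases hsh : ∀ x ∈ e, x ∉ e'
    · rw [W_disjoint hsh, if_pos hsh]
    · have hsh' := hsh
      push_neg at hsh'
      obtain ⟨x, hx, hx'⟩ := hsh'
      rw [W_share heq hx hx', if_neg hsh]

lemma edge_pair_count (G : SimpleGraph V) [DecidableRel G.Adj] (n : Fin K → ℕ)
    {e e' : Sym2 V} (he : e ∈ G.edgeFinset) (he' : e' ∈ G.edgeFinset)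
    (hsh : ∀ x ∈ e, x ∉ e') (i j k : Fin K) (hij : i ≠ j) (hik : i ≠ k) (hjk : j ≠ k) :
    ((labelings n).filter fun f =>
        Sym2.map f e = s(i, i) ∧ Sym2.map f e' = s(j, k)).card
        * (Fintype.card V).descFactorial 4
      = (labelings (V := V) n).card * (2 * ((n i).descFactorial 2 * (n j * n k))) := by
  induction e with
  | _ a b =>
    induction e' with
    | _ c d =>
      have hab : a ≠ b := (G.mem_edgeSet.1 (SimpleGraph.mem_edgeFinset.1 he)).ne
      have hcd : c ≠ d := (G.mem_edgeSet.1 (SimpleGraph.mem_edgeFinset.1 he')).ne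
      have hma : a ∉ s(c, d) := hsh a (Sym2.mem_mk_left a b)
      have hmb : b ∉ s(c, d) := hsh b (Sym2.mem_mk_right a b)
      rw [Sym2.mem_iff] at hma hmb
      push_neg at hma hmb
      exact count_disjoint_edges n hab hcd hma.1 hma.2 hmb.1 hmb.2 i j k hij hik hjk

lemma edge_count_ii (G : SimpleGraph V) [DecidableRel G.Adj] (n : Fin K → ℕ)
    {e : Sym2 V} (he : e ∈ G.edgeFinset) (i : Fin K) :
    ((labelings n).filter fun f => Sym2.map f e = s(i, i)).card
        * (Fintype.card V).descFactorial 2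
      = (labelings (V := V) n).card * (n i).descFactorial 2 := by
  induction e with
  | _ a b =>
    exact count_edge_ii n (G.mem_edgeSet.1 (SimpleGraph.mem_edgeFinset.1 he)).ne i

lemma edge_count_jk (G : SimpleGraph V) [DecidableRel G.Adj] (n : Fin K → ℕ)
    {e : Sym2 V} (he : e ∈ G.edgeFinset) (j k : Fin K) (hjk : j ≠ k) :
    ((labelings n).filter fun f => Sym2.map f e = s(j, k)).card
        * (Fintype.card V).descFactorial 2
      = (labelings (V := V) n).card * (2 * (n j * n k)) := by
  induction e with
  | _ a b =>
    exact count_edge_jk n (G.mem_edgeSet.1 (SimpleGraph.mem_edgeFinset.1 he)).ne j k hjk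

lemma cast_df2 (a : ℕ) : ((a.descFactorial 2 : ℕ) : ℝ) = (a:ℝ) * ((a:ℝ) - 1) := by
  rcases a with _ | a
  · simp [Nat.descFactorial]
  · simp [Nat.descFactorial]
    ring

lemma cast_df4 {N : ℕ} (h : 4 ≤ N) :
    ((N.descFactorial 4 : ℕ) : ℝ) = (N:ℝ) * ((N:ℝ)-1) * ((N:ℝ)-2) * ((N:ℝ)-3) := by
  obtain ⟨M, rfl⟩ : ∃ M, N = M + 4 := ⟨N - 4, by omega⟩
  simp [Nat.descFactorial]
  ring

lemma covar_eq_expect_mul (n : Fin K → ℕ) (X Y : (V → Fin K) → ℝ)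
    (hL : (((labelings n : Finset (V → Fin K))).card : ℝ) ≠ 0) :
    covar n X Y = expect n (fun f => X f * Y f) - expect n X * expect n Y := by
  unfold covar _root_.expect
  have hpt : ∀ f : V → Fin K,
      (X f - (∑ g ∈ labelings n, X g) / (((labelings n : Finset (V → Fin K))).card : ℝ))
        * (Y f - (∑ g ∈ labelings n, Y g) / (((labelings n : Finset (V → Fin K))).card : ℝ))
      = X f * Y f
        - ((∑ g ∈ labelings n, X g) / (((labelings n : Finset (V → Fin K))).card : ℝ)) * Y f
        - ((∑ g ∈ labelings n, Y g) / (((labelings n : Finset (V → Fin K))).card : ℝ)) * X f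
        + ((∑ g ∈ labelings n, X g) / (((labelings n : Finset (V → Fin K))).card : ℝ))
          * ((∑ g ∈ labelings n, Y g) / (((labelings n : Finset (V → Fin K))).card : ℝ)) :=
    fun f => by ring
  rw [Finset.sum_congr rfl fun f _ => hpt f]
  rw [Finset.sum_add_distrib, Finset.sum_sub_distrib, Finset.sum_sub_distrib,
    ← Finset.mul_sum, ← Finset.mul_sum, Finset.sum_const, nsmul_eq_mul]
  field_simp
  ring

end Aux

theorem stmt_12 (G : SimpleGraph V) [DecidableRel G.Adj]
    (n : Fin K → ℕ) (N : ℕ) (hN : N = Fintype.card V) (hN4 : 4 ≤ N)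
    (hsum : ∑ k, n k = N) (i j k : Fin K) (hij : i ≠ j) (hik : i ≠ k) (hjk : j ≠ k)
    (m D : ℝ) (hm : m = (G.edgeFinset.card : ℝ))
    (hD : D = ∑ t : V, (G.degree t : ℝ) ^ 2) :
    covar n (fun f : V → Fin K => (Rcount G f i i : ℝ))
        (fun f : V → Fin K => (Rcount G f j k : ℝ))
      = (m ^ 2 - D + m) * (2 * (n i : ℝ) * (n j : ℝ) * (n k : ℝ) * ((n i : ℝ) - 1)
            / ((N : ℝ) * ((N : ℝ) - 1) * ((N : ℝ) - 2) * ((N : ℝ) - 3)))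
        - (m * (n i : ℝ) * ((n i : ℝ) - 1) / ((N : ℝ) * ((N : ℝ) - 1)))
          * (2 * m * (n j : ℝ) * (n k : ℝ) / ((N : ℝ) * ((N : ℝ) - 1))) := by
  classical
  have hsum' : ∑ kk, n kk = Fintype.card V := by rw [← hN]; exact hsum
  have hLpos : 0 < ((labelings n : Finset (V → Fin K))).card :=
    Finset.card_pos.2 (labelings_nonempty n hsum')
  set L : ℕ := ((labelings n : Finset (V → Fin K))).card with hLdef
  have hLr : (L:ℝ) ≠ 0 := Nat.cast_ne_zero.2 hLpos.ne'
  have hNr4 : (4:ℝ) ≤ (N:ℝ) := by exact_mod_cast hN4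
  have h0 : (0:ℝ) < (N:ℝ) := by linarith
  have h1 : (0:ℝ) < (N:ℝ) - 1 := by linarith
  have h2 : (0:ℝ) < (N:ℝ) - 2 := by linarith
  have h3 : (0:ℝ) < (N:ℝ) - 3 := by linarith
  have hd2 : (N:ℝ) * ((N:ℝ)-1) ≠ 0 := ne_of_gt (mul_pos h0 h1)
  have hd4 : (N:ℝ) * ((N:ℝ)-1) * ((N:ℝ)-2) * ((N:ℝ)-3) ≠ 0 :=
    ne_of_gt (mul_pos (mul_pos (mul_pos h0 h1) h2) h3)
  have hc2 : (((Fintype.card V).descFactorial 2 : ℕ) : ℝ) = (N:ℝ) * ((N:ℝ)-1) := by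
    rw [← hN]; exact cast_df2 N
  have hc4 : (((Fintype.card V).descFactorial 4 : ℕ) : ℝ)
      = (N:ℝ) * ((N:ℝ)-1) * ((N:ℝ)-2) * ((N:ℝ)-3) := by
    rw [← hN]; exact cast_df4 hN4
  -- natural number identities
  have key1 : (∑ f ∈ labelings n, Rcount G f i i) * (Fintype.card V).descFactorial 2
      = G.edgeFinset.card * (L * (n i).descFactorial 2) := by
    rw [sum_R, Finset.sum_mul,
      Finset.sum_congr rfl fun e he => edge_count_ii G n he i,
      Finset.sum_const, smul_eq_mul]
  have key2 : (∑ f ∈ labelings n, Rcount G f j k) * (Fintype.card V).descFactorial 2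
      = G.edgeFinset.card * (L * (2 * (n j * n k))) := by
    rw [sum_R, Finset.sum_mul,
      Finset.sum_congr rfl fun e he => edge_count_jk G n he j k hjk,
      Finset.sum_const, smul_eq_mul]
  have key3 : (∑ f ∈ labelings n, Rcount G f i i * Rcount G f j k)
        * (Fintype.card V).descFactorial 4
      = (∑ e ∈ G.edgeFinset, ∑ e' ∈ G.edgeFinset,
          if ∀ x ∈ e, x ∉ e' then 1 else 0)
        * (L * (2 * ((n i).descFactorial 2 * (n j * n k)))) := by
    rw [sum_RR, Finset.sum_mul]
    conv_rhs => rw [Finset.sum_mul]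
    refine Finset.sum_congr rfl fun e he => ?_
    rw [Finset.sum_mul, Finset.sum_mul]
    refine Finset.sum_congr rfl fun e' he' => ?_
    by_cases hsh : ∀ x ∈ e, x ∉ e'
    · rw [if_pos hsh, one_mul]
      exact edge_pair_count G n he he' hsh i j k hij hik hjk
    · rw [if_neg hsh, zero_mul]
      have hsh' := hsh
      push_neg at hsh'
      obtain ⟨x, hx, hx'⟩ := hsh'
      rw [filter_share_empty n e e' x hx hx' i j k hij hik]
      simp
  have keyD : ∑ t : V, G.degree t ^ 2
      = G.edgeFinset.card
        + ∑ e ∈ G.edgeFinset, ∑ e' ∈ G.edgeFinset,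
            (if ∀ x ∈ e, x ∉ e' then 0 else 1) := by
    rw [sum_deg_sq,
      Finset.sum_congr rfl fun e he => Finset.sum_congr rfl fun e' he' =>
        W_formula G he he']
    rw [Finset.sum_congr rfl fun e (he : e ∈ G.edgeFinset) => Finset.sum_add_distrib,
      Finset.sum_add_distrib]
    congr 1
    rw [Finset.sum_congr rfl fun e (he : e ∈ G.edgeFinset) =>
      (Finset.sum_ite_eq G.edgeFinset e fun _ => 1)]
    rw [Finset.sum_congr rfl fun e (he : e ∈ G.edgeFinset) => if_pos he]
    simp
  have keyP : (∑ e ∈ G.edgeFinset, ∑ e' ∈ G.edgeFinset,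
          if ∀ x ∈ e, x ∉ e' then 1 else 0)
        + (∑ e ∈ G.edgeFinset, ∑ e' ∈ G.edgeFinset,
            (if ∀ x ∈ e, x ∉ e' then 0 else 1))
      = G.edgeFinset.card * G.edgeFinset.card := by
    rw [← Finset.sum_add_distrib]
    have hpt : ∀ e ∈ G.edgeFinset,
        ((∑ e' ∈ G.edgeFinset, if ∀ x ∈ e, x ∉ e' then (1:ℕ) else 0)
          + ∑ e' ∈ G.edgeFinset, if ∀ x ∈ e, x ∉ e' then (0:ℕ) else 1)
        = G.edgeFinset.card := by
      intro e he
      rw [← Finset.sum_add_distrib]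
      have hone : ∀ e' ∈ G.edgeFinset,
          ((if ∀ x ∈ e, x ∉ e' then (1:ℕ) else 0) + if ∀ x ∈ e, x ∉ e' then (0:ℕ) else 1) = 1 :=
        fun e' _ => by
          by_cases hsh : ∀ x ∈ e, x ∉ e'
          · rw [if_pos hsh, if_pos hsh]
          · rw [if_neg hsh, if_neg hsh]
      rw [Finset.sum_congr rfl hone, Finset.sum_const, smul_eq_mul, mul_one]
    rw [Finset.sum_congr rfl hpt, Finset.sum_const, smul_eq_mul]
  -- pass to the reals
  set disN : ℕ := ∑ e ∈ G.edgeFinset, ∑ e' ∈ G.edgeFinset,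
      if ∀ x ∈ e, x ∉ e' then 1 else 0 with hdisNdef
  set Tn : ℕ := ∑ e ∈ G.edgeFinset, ∑ e' ∈ G.edgeFinset,
      if ∀ x ∈ e, x ∉ e' then 0 else 1 with hTndef
  have hdis : ((disN : ℕ) : ℝ) = m ^ 2 - D + m := by
    have hDn : D = ((∑ t : V, G.degree t ^ 2 : ℕ) : ℝ) := by
      rw [hD]; push_cast; rfl
    have e1 : ((∑ t : V, G.degree t ^ 2 : ℕ) : ℝ)
        = (G.edgeFinset.card : ℝ) + ((Tn : ℕ) : ℝ) := by
      exact_mod_cast congrArg (Nat.cast : ℕ → ℝ) keyD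
    have e2 : ((disN : ℕ) : ℝ) + ((Tn : ℕ) : ℝ)
        = (G.edgeFinset.card : ℝ) * (G.edgeFinset.card : ℝ) := by
      exact_mod_cast congrArg (Nat.cast : ℕ → ℝ) keyP
    rw [hDn, hm]
    nlinarith [e1, e2]
  -- the three expectations
  have E1 : expect n (fun f : V → Fin K => (Rcount G f i i : ℝ))
      = m * (n i : ℝ) * ((n i : ℝ) - 1) / ((N:ℝ) * ((N:ℝ) - 1)) := by
    unfold _root_.expect
    have hS : (∑ f ∈ labelings n, (Rcount G f i i : ℝ))
        = ((∑ f ∈ labelings n, Rcount G f i i : ℕ) : ℝ) := by push_cast; rfl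
    rw [hS, div_eq_div_iff hLr hd2]
    have k1r := congrArg (Nat.cast : ℕ → ℝ) key1
    push_cast [hc2, cast_df2] at k1r
    rw [← hm] at k1r
    push_cast
    linear_combination k1r
  have E2 : expect n (fun f : V → Fin K => (Rcount G f j k : ℝ))
      = 2 * m * (n j : ℝ) * (n k : ℝ) / ((N:ℝ) * ((N:ℝ) - 1)) := by
    unfold _root_.expect
    have hS : (∑ f ∈ labelings n, (Rcount G f j k : ℝ))
        = ((∑ f ∈ labelings n, Rcount G f j k : ℕ) : ℝ) := by push_cast; rfl
    rw [hS, div_eq_div_iff hLr hd2]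
    have k2r := congrArg (Nat.cast : ℕ → ℝ) key2
    push_cast [hc2] at k2r
    rw [← hm] at k2r
    push_cast
    linear_combination k2r
  have E12 : expect n (fun f : V → Fin K => (Rcount G f i i : ℝ) * (Rcount G f j k : ℝ))
      = (m ^ 2 - D + m) * (2 * (n i : ℝ) * (n j : ℝ) * (n k : ℝ) * ((n i : ℝ) - 1))
          / ((N:ℝ) * ((N:ℝ) - 1) * ((N:ℝ) - 2) * ((N:ℝ) - 3)) := by
    unfold _root_.expect
    have hS : (∑ f ∈ labelings n, (Rcount G f i i : ℝ) * (Rcount G f j k : ℝ))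
        = ((∑ f ∈ labelings n, Rcount G f i i * Rcount G f j k : ℕ) : ℝ) := by
      push_cast; rfl
    rw [hS, div_eq_div_iff hLr hd4]
    have k3r := congrArg (Nat.cast : ℕ → ℝ) key3
    push_cast [hc4, cast_df2] at k3r
    rw [hdis] at k3r
    push_cast
    linear_combination k3r
  rw [covar_eq_expect_mul n _ _ hLr, E1, E2, E12]
  ring
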